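/- Suppose V = Θ̃ Π Θ̃(I,I)^{-1} V(I,:) and V'V = I_K, where Π is a membership matrix with pure-node index tuple I satisfying Π(I,:) = I_K and Θ̃ is diagonal with strictly positive diagonal, and suppose every row of V is nonzero and V(I,:) is invertible. Then the matrix V_{*,1}(I,:) V_{*,1}(I,:)' is invertible, its inverse equals N_V(I,I)^{-1} Θ̃(I,I)^{-1} (Π' Θ̃² Π) Θ̃(I,I)^{-1} N_V(I,I)^{-1}, and every entry of the vector (V_{*,1}(I,:) V_{*,1}(I,:)')^{-1} 𝟏 is strictly positive, where 𝟏 is the all-ones vector in ℝ^K. -/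

import Mathlib

open Matrix

/-- The Euclidean norm of a row vector. -/
noncomputable def rnorm {m : ℕ} (v : Fin m → ℝ) : ℝ := Real.sqrt (∑ j, v j ^ 2)

/-- Row-wise ℓ₂-normalization of a matrix. -/
noncomputable def rowNormalize {n m : ℕ} (V : Matrix (Fin n) (Fin m) ℝ) :
    Matrix (Fin n) (Fin m) ℝ :=
  Matrix.of fun i j => V i j / rnorm (V i)

lemma rnorm_pos {m : ℕ} {v : Fin m → ℝ} (hv : v ≠ 0) : 0 < rnorm v := by
  obtain ⟨j, hj⟩ : ∃ j, v j ≠ 0 := by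
    by_contra h
    push_neg at h
    exact hv (funext h)
  apply Real.sqrt_pos.2
  exact Finset.sum_pos' (fun i _ => sq_nonneg _)
    ⟨j, Finset.mem_univ _, pow_pos (abs_pos.2 hj) 2 |>.trans_eq (sq_abs _)⟩

/-- Under the ideal setup (`V = Θ̃ Π Θ̃(I,I)⁻¹ V(I,:)`, `V'V = I_K`, rows of
`V` nonzero, `V(I,:)` invertible), the matrix `V₊(I,:) V₊(I,:)'` is invertible, its inverse
equals `N_V(I,I)⁻¹ Θ̃(I,I)⁻¹ (Π' Θ̃² Π) Θ̃(I,I)⁻¹ N_V(I,I)⁻¹`, and every entry of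
`(V₊(I,:) V₊(I,:)')⁻¹ 𝟏` is strictly positive. -/
theorem corner_gram_inverse_pos {n K : ℕ} (hK : 1 ≤ K) (hKn : K ≤ n)
    (Pim : Matrix (Fin n) (Fin K) ℝ)
    (hnonneg : ∀ i k, 0 ≤ Pim i k)
    (hrowsum : ∀ i, ∑ k, Pim i k = 1)
    (I : Fin K → Fin n)
    (hpure : ∀ k l, Pim (I k) l = if l = k then (1 : ℝ) else 0)
    (θ : Fin n → ℝ) (hθ : ∀ i, 0 < θ i)
    (V : Matrix (Fin n) (Fin K) ℝ)
    (hVorth : Vᵀ * V = 1)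
    (hVdef : V = Matrix.diagonal θ * Pim *
      (Matrix.diagonal (fun k => (θ (I k))⁻¹) * V.submatrix I id))
    (hrows : ∀ i, V i ≠ 0)
    (hVI : IsUnit (V.submatrix I id)) :
    let Vc := (rowNormalize V).submatrix I id
    IsUnit (Vc * Vcᵀ) ∧
    (Vc * Vcᵀ)⁻¹ =
      Matrix.diagonal (fun k => rnorm (V (I k))) *
        Matrix.diagonal (fun k => (θ (I k))⁻¹) *
        (Pimᵀ * Matrix.diagonal (fun i => θ i ^ 2) * Pim) *
        Matrix.diagonal (fun k => (θ (I k))⁻¹) *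
        Matrix.diagonal (fun k => rnorm (V (I k))) ∧
    ∀ k, 0 < ((Vc * Vcᵀ)⁻¹ *ᵥ fun _ => (1 : ℝ)) k := by
  intro Vc
  set W := V.submatrix I id with hW
  set A := Matrix.diagonal (fun k => (θ (I k))⁻¹) with hA
  set M := Pimᵀ * Matrix.diagonal (fun i => θ i ^ 2) * Pim with hM
  set R := Matrix.diagonal (fun k => rnorm (V (I k))) with hR
  set N := Matrix.diagonal (fun k => (rnorm (V (I k)))⁻¹) with hN
  have hrpos : ∀ k, 0 < rnorm (V (I k)) := fun k => rnorm_pos (hrows (I k))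
  have hdd : Matrix.diagonal θ * Matrix.diagonal θ
      = Matrix.diagonal (fun i => θ i ^ 2) := by
    rw [Matrix.diagonal_mul_diagonal]
    congr 1
    funext i
    ring
  -- key identity from orthogonality
  have hkey : Wᵀ * A * M * A * W = 1 := by
    rw [← hVorth]
    conv_rhs => rw [hVdef]
    rw [Matrix.transpose_mul, Matrix.transpose_mul, Matrix.transpose_mul,
      Matrix.diagonal_transpose, Matrix.diagonal_transpose]
    simp only [hM, Matrix.mul_assoc, ← hdd]
    rfl
  have hdet : IsUnit W.det := (Matrix.isUnit_iff_isUnit_det W).1 hVI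
  have hWinv : W * W⁻¹ = 1 := Matrix.mul_nonsing_inv W hdet
  have hinv : W * Wᵀ * A * M * A = 1 := by
    have h := congrArg (fun X => W * X * W⁻¹) hkey
    simp only [Matrix.mul_one] at h
    rw [hWinv] at h
    calc W * Wᵀ * A * M * A = W * Wᵀ * A * M * A * (W * W⁻¹) := by
          rw [hWinv, Matrix.mul_one]
      _ = W * (Wᵀ * A * M * A * W) * W⁻¹ := by simp only [Matrix.mul_assoc]
      _ = 1 := h
  -- Vc = N * W
  have hVc : Vc = N * W := by
    ext k j
    simp only [Vc, hN, hW, Matrix.submatrix_apply, Matrix.diagonal_mul, id_eq,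
      rowNormalize, Matrix.of_apply]
    rw [div_eq_inv_mul]
  have hNR : N * R = 1 := by
    rw [hN, hR, Matrix.diagonal_mul_diagonal]
    convert Matrix.diagonal_one with k
    exact inv_mul_cancel₀ (hrpos k).ne'
  -- the gram matrix and its right inverse
  have hNt : Nᵀ = N := Matrix.diagonal_transpose _
  have hgram : Vc * Vcᵀ = N * (W * Wᵀ) * N := by
    rw [hVc, Matrix.transpose_mul, hNt]
    simp only [Matrix.mul_assoc]
  have hright : (Vc * Vcᵀ) * (R * A * M * A * R) = 1 := by
    rw [hgram]
    calc N * (W * Wᵀ) * N * (R * A * M * A * R)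
        = N * (W * Wᵀ) * (N * R) * (A * M * A * R) := by
          simp only [Matrix.mul_assoc]
      _ = N * (W * Wᵀ * A * M * A) * R := by
          rw [hNR, Matrix.mul_one]
          simp only [Matrix.mul_assoc]
      _ = 1 := by rw [hinv, Matrix.mul_one, hNR]
  have hunit : IsUnit (Vc * Vcᵀ) := by
    rw [Matrix.isUnit_iff_isUnit_det]
    exact Matrix.isUnit_det_of_right_inverse hright
  have hinveq : (Vc * Vcᵀ)⁻¹ = R * A * M * A * R :=
    Matrix.inv_eq_right_inv hright
  refine ⟨hunit, hinveq, ?_⟩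
  -- positivity
  intro k
  rw [hinveq]
  have hMentry : ∀ k l, M k l = ∑ i, Pim i k * θ i ^ 2 * Pim i l := by
    intro k l
    rw [hM, Matrix.mul_apply]
    simp only [Matrix.mul_diagonal, Matrix.transpose_apply]
  have hMnn : ∀ k l, 0 ≤ M k l := by
    intro k l
    rw [hMentry]
    exact Finset.sum_nonneg fun i _ =>
      mul_nonneg (mul_nonneg (hnonneg i k) (sq_nonneg _)) (hnonneg i l)
  have hMkk : 0 < M k k := by
    rw [hMentry]
    refine Finset.sum_pos'
      (fun i _ => mul_nonneg (mul_nonneg (hnonneg i k) (sq_nonneg _)) (hnonneg i k))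
      ⟨I k, Finset.mem_univ _, ?_⟩
    rw [hpure k k, if_pos rfl]
    simpa using pow_pos (hθ (I k)) 2
  have hBentry : ∀ l, (R * A * M * A * R) k l =
      rnorm (V (I k)) * (θ (I k))⁻¹ * M k l * ((θ (I l))⁻¹ * rnorm (V (I l))) := by
    intro l
    simp only [hR, hA, Matrix.diagonal_mul_diagonal, Matrix.diagonal_mul,
      Matrix.mul_diagonal]
    ring
  have hcoef : ∀ l, 0 < rnorm (V (I l)) * (θ (I l))⁻¹ :=
    fun l => mul_pos (hrpos l) (inv_pos.2 (hθ (I l)))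
  simp only [Matrix.mulVec, dotProduct, mul_one]
  rw [show (fun l => (R * A * M * A * R) k l) = fun l =>
      rnorm (V (I k)) * (θ (I k))⁻¹ * M k l * ((θ (I l))⁻¹ * rnorm (V (I l)))
    from funext hBentry]
  refine Finset.sum_pos'
    (fun l _ => mul_nonneg (mul_nonneg (mul_pos (hrpos k) (inv_pos.2 (hθ (I k)))).le
      (hMnn k l)) (mul_nonneg (inv_pos.2 (hθ (I l))).le (hrpos l).le))
    ⟨k, Finset.mem_univ _, ?_⟩
  exact mul_pos (mul_pos (mul_pos (hrpos k) (inv_pos.2 (hθ (I k)))) hMkk)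
    (mul_pos (inv_pos.2 (hθ (I k))) (hrpos k))
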